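/- ν(d, i) = π(d) · σ_{≤i} for every vector d ∈ ℕ^{n−1} of nonnegative integers and every i ∈ {1, …, n}. (Interpretation: ν(d, i) is the probability that the transitional state (d, i) occurs when transitioning from a state distributed according to π.) -/

import Mathlib

/-- **Probability of transitional states (Lemma 7).**
`ν(d, i)` is the probability that the transitional state `(d, i)` occurs when
transitioning from a state distributed according to `π` (the product of
geometric distributions); it satisfies the recurrence below, and the claim is
`ν(d, i) = π(d) · σ_{≤i}` for all `d ∈ ℕ^{n-1}` and `i ∈ {1,…,n}`. -/
theorem multiqueue_transitional_state_probability
    (n : ℕ) (hn : 1 ≤ n) (σ : ℕ → ℝ)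
    (hσ0 : ∀ i ∈ Finset.Icc 1 n, 0 ≤ σ i)
    (hσ1 : ∑ i ∈ Finset.Icc 1 n, σ i = 1)
    (σle : ℕ → ℝ) (hσle : ∀ i, σle i = ∑ j ∈ Finset.Icc 1 i, σ j)
    (hstar : ∀ i ∈ Finset.Icc 1 (n - 1), (i : ℝ) / n < σle i)
    (p : ℕ → ℝ) (hp : ∀ i, p i = 1 - (i : ℝ) / (n * σle i))
    (π : (ℕ → ℕ) → ℝ)
    (hπ : ∀ d : ℕ → ℕ, π d = ∏ i ∈ Finset.Icc 1 (n - 1), (1 - p i) ^ (d i) * p i)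
    (e : ℕ → ℕ → ℕ)
    (he : ∀ i j, e i j = if j = i ∧ i ≤ n - 1 then 1 else 0)
    (ν : (ℕ → ℕ) → ℕ → ℝ)
    (hν1 : ∀ d : ℕ → ℕ, ν d 1 = π d * σ 1)
    (hνpos : ∀ d : ℕ → ℕ, ∀ i, 2 ≤ i → i ≤ n → 0 < d (i - 1) →
      ν d i = π d * σ i + ν (fun j => d j - e (i - 1) j + e i j) i * (1 - 1 / (i : ℝ)))
    (hνzero : ∀ d : ℕ → ℕ, ∀ i, 2 ≤ i → i ≤ n → d (i - 1) = 0 →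
      ν d i = π d * σ i + ν d (i - 1))
    (d : ℕ → ℕ) (i : ℕ) (hi : i ∈ Finset.Icc 1 n) :
    ν d i = π d * σle i := by
  obtain ⟨hi1, hin⟩ := Finset.mem_Icc.mp hi
  have hnR : (0:ℝ) < n := by exact_mod_cast hn
  have hσlen : σle n = 1 := by rw [hσle]; exact hσ1
  have hσlepos : ∀ j, 1 ≤ j → j ≤ n → 0 < σle j := by
    intro j h1 h2
    by_cases hj : j ≤ n - 1
    · have hs := hstar j (Finset.mem_Icc.mpr ⟨h1, hj⟩)
      have hj0 : (0:ℝ) < (j:ℝ) := by exact_mod_cast h1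
      have : (0:ℝ) < (j:ℝ)/n := by positivity
      linarith
    · have hjn : j = n := by omega
      rw [hjn, hσlen]; norm_num
  -- the key product ratio lemma
  have key : ∀ i, 1 ≤ i → i + 1 ≤ n → ∀ d : ℕ → ℕ, 1 ≤ d i →
      π (fun j => d j - e i j + e (i+1) j) * (1 - p i)
        = π d * (if i + 1 ≤ n - 1 then 1 - p (i+1) else 1) := by
    intro i h1 h2 d hd
    have him : i ∈ Finset.Icc 1 (n-1) := Finset.mem_Icc.mpr ⟨h1, by omega⟩
    obtain ⟨m, hm⟩ : ∃ m, d i = m + 1 := ⟨d i - 1, by omega⟩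
    rw [hπ, hπ]
    by_cases hc : i + 1 ≤ n - 1
    · rw [if_pos hc]
      have hi1m : i + 1 ∈ (Finset.Icc 1 (n-1)).erase i :=
        Finset.mem_erase.mpr ⟨by omega, Finset.mem_Icc.mpr ⟨by omega, hc⟩⟩
      rw [← Finset.mul_prod_erase _ _ him, ← Finset.mul_prod_erase _ _ hi1m,
          ← Finset.mul_prod_erase _ (fun j => (1 - p j) ^ (d j) * p j) him,
          ← Finset.mul_prod_erase _ (fun j => (1 - p j) ^ (d j) * p j) hi1m]
      have htail : ∀ j ∈ ((Finset.Icc 1 (n-1)).erase i).erase (i+1),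
          (1 - p j) ^ (d j - e i j + e (i+1) j) * p j = (1 - p j) ^ (d j) * p j := by
        intro j hj
        simp only [Finset.mem_erase] at hj
        have h3 : e i j = 0 := by rw [he]; simp [hj.2.1]
        have h4 : e (i+1) j = 0 := by rw [he]; simp [hj.1]
        simp [h3, h4]
      rw [Finset.prod_congr rfl htail]
      have hei : e i i = 1 := by rw [he]; simp; omega
      have hei2 : e (i+1) i = 0 := by rw [he]; simp
      have hfi : e i (i+1) = 0 := by rw [he]; simp
      have hfi2 : e (i+1) (i+1) = 1 := by rw [he]; simp; omega
      simp only [hei, hei2, hfi, hfi2, hm, Nat.add_sub_cancel, Nat.sub_zero, Nat.add_zero]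
      rw [pow_succ, pow_succ]
      ring
    · rw [if_neg hc]
      have hin1 : i = n - 1 := by omega
      rw [← Finset.mul_prod_erase _ _ him,
          ← Finset.mul_prod_erase _ (fun j => (1 - p j) ^ (d j) * p j) him]
      have htail : ∀ j ∈ (Finset.Icc 1 (n-1)).erase i,
          (1 - p j) ^ (d j - e i j + e (i+1) j) * p j = (1 - p j) ^ (d j) * p j := by
        intro j hj
        simp only [Finset.mem_erase] at hj
        have h3 : e i j = 0 := by rw [he]; simp [hj.1]
        have h4 : e (i+1) j = 0 := by rw [he]; simp [hc]
        simp [h3, h4]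
      rw [Finset.prod_congr rfl htail]
      have hei : e i i = 1 := by rw [he]; simp; omega
      have hei2 : e (i+1) i = 0 := by rw [he]; simp
      simp only [hei, hei2, hm, Nat.add_sub_cancel, Nat.sub_zero, Nat.add_zero]
      rw [pow_succ]
      ring
  -- main induction
  have main : ∀ i, 1 ≤ i → i ≤ n → ∀ d : ℕ → ℕ, ν d i = π d * σle i := by
    intro i
    induction i with
    | zero => omega
    | succ i ih =>
      intro _ h2 d
      rcases Nat.eq_zero_or_pos i with hi0 | hipos
      · subst hi0
        rw [hν1, hσle]
        simp
      · -- i ≥ 1, so i+1 ≥ 2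
        have hS : 0 < σle i := hσlepos i hipos (by omega)
        have hS' : 0 < σle (i+1) := hσlepos (i+1) (by omega) h2
        have hSeq : σle (i+1) = σle i + σ (i+1) := by
          rw [hσle, hσle, Finset.sum_Icc_succ_top (by omega)]
        have hine : (0:ℝ) < (i:ℝ) := by exact_mod_cast hipos
        have h1pi : 1 - p i = (i:ℝ) / (n * σle i) := by rw [hp]; ring
        have inner : ∀ k, ∀ d : ℕ → ℕ, d i = k → ν d (i+1) = π d * σle (i+1) := by
          intro k
          induction k with
          | zero =>
            intro d hd
            rw [hνzero d (i+1) (by omega) h2 (by simpa using hd),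
                Nat.add_sub_cancel, ih hipos (by omega) d, hSeq]
            ring
          | succ k ihk =>
            intro d hd
            rw [hνpos d (i+1) (by omega) h2 (by simp [hd])]
            simp only [Nat.add_sub_cancel]
            set d' : ℕ → ℕ := fun j => d j - e i j + e (i+1) j with hd'def
            have hd'i : d' i = k := by
              have h3 : e i i = 1 := by rw [he]; simp; omega
              have h4 : e (i+1) i = 0 := by rw [he]; simp
              simp [hd'def, h3, h4, hd]
            rw [ihk d' hd'i]
            have hkey := key i hipos h2 d (by omega)
            rw [← hd'def, h1pi] at hkey
            have hSne : σle i ≠ 0 := ne_of_gt hS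
            have hS'ne : σle (i+1) ≠ 0 := ne_of_gt hS'
            have hnne : (n:ℝ) ≠ 0 := ne_of_gt hnR
            have hiRne : (i:ℝ) ≠ 0 := ne_of_gt hine
            have hi1ne : (i:ℝ) + 1 ≠ 0 := by positivity
            push_cast
            have hstep : π d' * σle (i+1) * (1 - 1/((i:ℝ)+1)) = π d * σle i := by
              by_cases hc : i + 1 ≤ n - 1
              · rw [if_pos hc,
                  show 1 - p (i+1) = ((i:ℝ)+1)/(n*σle (i+1)) by rw [hp]; push_cast; ring] at hkey
                field_simp at hkey
                have hkey2 : π d' * ((i:ℝ) * σle (i+1)) = π d * (((i:ℝ)+1) * σle i) :=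
                  mul_left_cancel₀ hnne (by linear_combination (n:ℝ) * hkey)
                field_simp
                linear_combination hkey2
              · rw [if_neg hc, mul_one] at hkey
                have hS'1 : σle (i+1) = 1 := by rw [show i+1 = n by omega, hσlen]
                have hn1 : ((n:ℕ):ℝ) = (i:ℝ)+1 := by
                  rw [show n = i + 1 by omega]; push_cast; ring
                rw [hn1] at hkey
                rw [hS'1]
                field_simp at hkey ⊢
                linear_combination hkey
            linear_combination hstep - π d * hSeq
        exact inner (d i) d rfl
  exact main i hi1 hin d
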